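/- For n ≥ 2 and any element (a|b) ∈ W^odd ∩ W^P with (a|b) ≠ (2̄|3̄), there exists (c|d) ∈ W^odd ∩ W^P with (a|b) < (c|d) in Bruhat order and ℓ(c|d) = ℓ(a|b) + 1. -/

import Mathlib

/-- `w(t_i - t_j)` is a negative root (type `C`). -/
abbrev DiffNeg (x y : ℤ) : Prop :=
  (x < 0 ∧ 0 < y) ∨ (0 < x ∧ 0 < y ∧ y < x) ∨ (x < 0 ∧ y < 0 ∧ y < x)

/-- `w(t_i + t_j)` is a negative root (type `C`). -/
abbrev SumNeg (x y : ℤ) : Prop :=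
  (x < 0 ∧ y < 0) ∨ (x < 0 ∧ 0 < y ∧ 0 < x + y) ∨ (0 < x ∧ y < 0 ∧ 0 < x + y)

/-- Coxeter length of a signed permutation of `{±1,…,±m}` given by its
window `f : Fin m → ℤ`. -/
def clen (m : ℕ) (f : Fin m → ℤ) : ℕ :=
  (Finset.univ.filter fun p : Fin m × Fin m => p.1 < p.2 ∧ DiffNeg (f p.1) (f p.2)).card +
  (Finset.univ.filter fun p : Fin m × Fin m => p.1 < p.2 ∧ SumNeg (f p.1) (f p.2)).card +
  (Finset.univ.filter fun i : Fin m => f i < 0).card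

/-- The window of the minimal length representative of the coset `(x|y)` in
`W/W_P` (type `C_{n+1}`, `P` excluding `s₁, s₂`): first `x`, then `y`, then
the remaining positive values in increasing order. -/
def minRep (n : ℕ) (x y : ℤ) : Fin (n + 1) → ℤ := fun i =>
  if (i : ℕ) = 0 then x
  else if (i : ℕ) = 1 then y
  else (((((Finset.Icc 1 (n + 1)).filter
      (fun v : ℕ => (v : ℤ) ≠ |x| ∧ (v : ℤ) ≠ |y|)).sort (· ≤ ·)).getD
      ((i : ℕ) - 2) 0 : ℕ) : ℤ)

/-- Length of the minimal length coset representative `(x|y)`. -/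
def plen (n : ℕ) (x y : ℤ) : ℕ := clen (n + 1) (minRep n x y)

/-- The position of the signed value `x` in the linear order
`1 < 2 < ⋯ < n+1 < n+1̄ < ⋯ < 1̄` (where `ī = 2n+3-i`). -/
def idx (n : ℕ) (x : ℤ) : ℤ := if 0 < x then x else 2 * (n : ℤ) + 3 + x

/-- Tableau criterion for the Bruhat order on `W^P`:
`(x|y) ≤ (c|d)` iff `x ≤ c` and the sorted pairs compare componentwise. -/
def tabLe (n : ℕ) (x y c d : ℤ) : Prop :=
  idx n x ≤ idx n c ∧ min (idx n x) (idx n y) ≤ min (idx n c) (idx n d) ∧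
    max (idx n x) (idx n y) ≤ max (idx n c) (idx n d)

section tested
lemma peel (m : ℕ) (g : Fin (m+1) → ℤ) (Q : ℤ → ℤ → Prop) [DecidableRel Q] :
    (Finset.univ.filter fun p : Fin (m+1) × Fin (m+1) => p.1 < p.2 ∧ Q (g p.1) (g p.2)).card
    = (∑ j : Fin m, if Q (g 0) (g j.succ) then 1 else 0)
      + (Finset.univ.filter fun p : Fin m × Fin m =>
          p.1 < p.2 ∧ Q (g p.1.succ) (g p.2.succ)).card := by
  rw [Finset.card_filter, Finset.card_filter, Fintype.sum_prod_type, Fintype.sum_prod_type,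
    Fin.sum_univ_succ]
  congr 1
  · rw [Fin.sum_univ_succ]; simp
  · exact Finset.sum_congr rfl fun i _ => by
      rw [Fin.sum_univ_succ]; simp [Fin.succ_lt_succ_iff]

lemma peel1 (m : ℕ) (g : Fin (m+1) → ℤ) :
    (Finset.univ.filter fun i : Fin (m+1) => g i < 0).card
    = (if g 0 < 0 then 1 else 0)
      + (Finset.univ.filter fun i : Fin m => g i.succ < 0).card := by
  rw [Finset.card_filter, Finset.card_filter, Fin.sum_univ_succ]

lemma sum_fin_getD (g : ℕ → ℕ) : ∀ (l : List ℕ) (c : ℕ), l.length = c →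
    ∑ j : Fin c, g (l.getD j 0) = (l.map g).sum := by
  intro l
  induction l with
  | nil => rintro c rfl; simp
  | cons a t ih =>
    rintro c rfl
    simp only [List.length_cons]
    rw [Fin.sum_univ_succ]
    simp only [Fin.val_zero, List.getD_cons_zero, List.map_cons, List.sum_cons]
    congr 1
    rw [← ih t.length rfl]
    exact Finset.sum_congr rfl fun j _ => by simp [List.getD_cons_succ]

lemma sum_sort_card (S : Finset ℕ) (P : ℕ → Prop) [DecidablePred P] (c : ℕ)
    (hc : (S.sort (· ≤ ·)).length = c) :
    (∑ j : Fin c, if P ((S.sort (· ≤ ·)).getD j 0) then 1 else 0) = (S.filter P).card := by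
  rw [sum_fin_getD (fun v => if P v then 1 else 0) _ c hc, Finset.card_filter,
    ← Finset.sum_map_toList]
  exact List.Perm.sum_eq (List.Perm.map _ (Finset.sort_perm_toList _ _))

lemma getD_sort_mem (S : Finset ℕ) (j : ℕ) (h : j < (S.sort (· ≤ ·)).length) :
    (S.sort (· ≤ ·)).getD j 0 ∈ S := by
  rw [List.getD_eq_getElem _ _ h]
  exact (Finset.mem_sort _).mp (List.getElem_mem _)

lemma getD_sort_lt (S : Finset ℕ) (i j : ℕ) (hij : i < j) (h : j < (S.sort (· ≤ ·)).length) :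
    (S.sort (· ≤ ·)).getD i 0 < (S.sort (· ≤ ·)).getD j 0 := by
  rw [List.getD_eq_getElem _ _ h, List.getD_eq_getElem _ _ (lt_trans hij h)]
  exact (Finset.sortedLT_sort S).getElem_lt_getElem_of_lt hij

lemma pairCount (k : ℕ) (f : Fin (k+2+1) → ℤ) (S : Finset ℕ) (x y : ℤ)
    (Q : ℤ → ℤ → Prop) [DecidableRel Q]
    (h0 : f 0 = x) (h1 : f 1 = y)
    (hlen : (S.sort (· ≤ ·)).length = k+1)
    (ht : ∀ j : Fin (k+1), f j.succ.succ = (((S.sort (· ≤ ·)).getD j 0 : ℕ) : ℤ))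
    (hQ0 : ∀ u v : ℕ, u ∈ S → v ∈ S → u < v → ¬ Q u v) :
    (Finset.univ.filter fun p : Fin (k+2+1) × Fin (k+2+1) =>
        p.1 < p.2 ∧ Q (f p.1) (f p.2)).card
    = (if Q x y then 1 else 0)
      + ((S.filter fun v : ℕ => Q x (v:ℤ)).card + (S.filter fun v : ℕ => Q y (v:ℤ)).card) := by
  rw [peel (k+2) f Q, peel (k+1) (fun i => f i.succ) Q]
  have htail : (Finset.univ.filter fun p : Fin (k+1) × Fin (k+1) =>
      p.1 < p.2 ∧ Q (f p.1.succ.succ) (f p.2.succ.succ)).card = 0 := by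
    rw [Finset.card_eq_zero, Finset.filter_eq_empty_iff]
    rintro p - ⟨hlt, hq⟩
    rw [ht p.1, ht p.2] at hq
    exact hQ0 _ _ (getD_sort_mem S p.1 (by rw [hlen]; exact p.1.isLt))
      (getD_sort_mem S p.2 (by rw [hlen]; exact p.2.isLt))
      (getD_sort_lt S p.1 p.2 hlt (by rw [hlen]; exact p.2.isLt)) (by exact_mod_cast hq)
  have e1 : (∑ j : Fin (k+1), if Q x (f j.succ.succ) then 1 else 0)
      = (S.filter fun v : ℕ => Q x (v:ℤ)).card := by
    rw [← sum_sort_card S (fun v : ℕ => Q x (v:ℤ)) (k+1) hlen]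
    exact Finset.sum_congr rfl fun j _ => by rw [ht j]
  have e2 : (∑ j : Fin (k+1), if Q y (f j.succ.succ) then 1 else 0)
      = (S.filter fun v : ℕ => Q y (v:ℤ)).card := by
    rw [← sum_sort_card S (fun v : ℕ => Q y (v:ℤ)) (k+1) hlen]
    exact Finset.sum_congr rfl fun j _ => by rw [ht j]
  rw [htail, h0, Fin.sum_univ_succ, Fin.succ_zero_eq_one, h1, e1, e2]
  omega

lemma cardK1 (n : ℕ) (a b : ℤ) (ha1 : 1 ≤ a) (ha2 : a ≤ n+1) (hb1 : 1 ≤ b) (hb2 : b ≤ n+1)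
    (hab : a ≠ b) :
    ((((Finset.Icc 1 (n+1)).filter fun v : ℕ => (v:ℤ) ≠ a ∧ (v:ℤ) ≠ b)).card : ℤ) = n - 1 := by
  have h : ((Finset.Icc 1 (n+1)).filter fun v : ℕ => (v:ℤ) ≠ a ∧ (v:ℤ) ≠ b)
      = ((Finset.Icc 1 (n+1)).erase a.toNat).erase b.toNat := by
    ext v
    simp only [Finset.mem_filter, Finset.mem_erase, Finset.mem_Icc]
    omega
  rw [h, Finset.card_erase_of_mem, Finset.card_erase_of_mem] <;>
    simp only [Finset.mem_erase, Finset.mem_Icc, Nat.card_Icc]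
  · push_cast; omega
  · omega
  · omega

lemma cardK2 (n : ℕ) (a b : ℤ) (ha1 : 1 ≤ a) (ha2 : a ≤ n+1) (hb1 : 1 ≤ b) (hb2 : b ≤ n+1) :
    ((((Finset.Icc 1 (n+1)).filter
      fun v : ℕ => ((v:ℤ) ≠ a ∧ (v:ℤ) ≠ b) ∧ (v:ℤ) < a)).card : ℤ)
      = (a - 1) - (if b < a then 1 else 0) := by
  rcases lt_or_ge b a with h | h
  · have he : ((Finset.Icc 1 (n+1)).filter fun v : ℕ => ((v:ℤ) ≠ a ∧ (v:ℤ) ≠ b) ∧ (v:ℤ) < a)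
        = (Finset.Icc 1 (a-1).toNat).erase b.toNat := by
      ext v
      simp only [Finset.mem_filter, Finset.mem_erase, Finset.mem_Icc]
      omega
    rw [he, Finset.card_erase_of_mem (by simp only [Finset.mem_Icc]; omega), if_pos h,
      Nat.card_Icc]
    push_cast; omega
  · have he : ((Finset.Icc 1 (n+1)).filter fun v : ℕ => ((v:ℤ) ≠ a ∧ (v:ℤ) ≠ b) ∧ (v:ℤ) < a)
        = Finset.Icc 1 (a-1).toNat := by
      ext v
      simp only [Finset.mem_filter, Finset.mem_Icc]
      omega
    rw [he, if_neg (by omega), Nat.card_Icc]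
    push_cast; omega

lemma cardK3 (n : ℕ) (a b : ℤ) (ha1 : 1 ≤ a) (ha2 : a ≤ n+1) (hb1 : 1 ≤ b) (hb2 : b ≤ n+1) :
    ((((Finset.Icc 1 (n+1)).filter
      fun v : ℕ => ((v:ℤ) ≠ a ∧ (v:ℤ) ≠ b) ∧ a < (v:ℤ))).card : ℤ)
      = (n + 1 - a) - (if a < b then 1 else 0) := by
  rcases lt_or_ge a b with h | h
  · have he : ((Finset.Icc 1 (n+1)).filter fun v : ℕ => ((v:ℤ) ≠ a ∧ (v:ℤ) ≠ b) ∧ a < (v:ℤ))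
        = (Finset.Icc (a.toNat+1) (n+1)).erase b.toNat := by
      ext v
      simp only [Finset.mem_filter, Finset.mem_erase, Finset.mem_Icc]
      omega
    rw [he, Finset.card_erase_of_mem (by simp only [Finset.mem_Icc]; omega), if_pos h,
      Nat.card_Icc]
    push_cast; omega
  · have he : ((Finset.Icc 1 (n+1)).filter fun v : ℕ => ((v:ℤ) ≠ a ∧ (v:ℤ) ≠ b) ∧ a < (v:ℤ))
        = Finset.Icc (a.toNat+1) (n+1) := by
      ext v
      simp only [Finset.mem_filter, Finset.mem_Icc]
      omega
    rw [he, if_neg (by omega), Nat.card_Icc]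
    push_cast; omega
end tested

lemma cardK2' (n : ℕ) (a b : ℤ) (ha1 : 1 ≤ a) (ha2 : a ≤ n+1) (hb1 : 1 ≤ b) (hb2 : b ≤ n+1) :
    ((((Finset.Icc 1 (n+1)).filter
      fun v : ℕ => ((v:ℤ) ≠ a ∧ (v:ℤ) ≠ b) ∧ (v:ℤ) < b)).card : ℤ)
      = (b - 1) - (if a < b then 1 else 0) := by
  have he : ((Finset.Icc 1 (n+1)).filter fun v : ℕ => ((v:ℤ) ≠ a ∧ (v:ℤ) ≠ b) ∧ (v:ℤ) < b)
      = ((Finset.Icc 1 (n+1)).filter fun v : ℕ => ((v:ℤ) ≠ b ∧ (v:ℤ) ≠ a) ∧ (v:ℤ) < b) :=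
    Finset.filter_congr fun v _ => by tauto
  rw [he]
  exact cardK2 n b a hb1 hb2 ha1 ha2

lemma cardK3' (n : ℕ) (a b : ℤ) (ha1 : 1 ≤ a) (ha2 : a ≤ n+1) (hb1 : 1 ≤ b) (hb2 : b ≤ n+1) :
    ((((Finset.Icc 1 (n+1)).filter
      fun v : ℕ => ((v:ℤ) ≠ a ∧ (v:ℤ) ≠ b) ∧ b < (v:ℤ))).card : ℤ)
      = (n + 1 - b) - (if b < a then 1 else 0) := by
  have he : ((Finset.Icc 1 (n+1)).filter fun v : ℕ => ((v:ℤ) ≠ a ∧ (v:ℤ) ≠ b) ∧ b < (v:ℤ))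
      = ((Finset.Icc 1 (n+1)).filter fun v : ℕ => ((v:ℤ) ≠ b ∧ (v:ℤ) ≠ a) ∧ b < (v:ℤ)) :=
    Finset.filter_congr fun v _ => by tauto
  rw [he]
  exact cardK3 n b a hb1 hb2 ha1 ha2

lemma negCount (k : ℕ) (f : Fin (k+2+1) → ℤ) (S : Finset ℕ) (x y : ℤ)
    (h0 : f 0 = x) (h1 : f 1 = y)
    (ht : ∀ j : Fin (k+1), f j.succ.succ = (((S.sort (· ≤ ·)).getD j 0 : ℕ) : ℤ)) :
    (Finset.univ.filter fun i : Fin (k+2+1) => f i < 0).card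
    = (if x < 0 then 1 else 0) + (if y < 0 then 1 else 0) := by
  rw [peel1 (k+2) f, peel1 (k+1) (fun i => f i.succ)]
  have htail : (Finset.univ.filter fun i : Fin (k+1) => f i.succ.succ < 0).card = 0 := by
    rw [Finset.card_eq_zero, Finset.filter_eq_empty_iff]
    intro i _
    rw [ht i]
    exact not_lt.mpr (Int.natCast_nonneg _)
  rw [htail, h0, Fin.succ_zero_eq_one, h1]
  omega

set_option maxHeartbeats 2000000 in
lemma plen_formula (n : ℕ) (hn : 2 ≤ n) (x y : ℤ)
    (hx1 : 1 ≤ |x|) (hx2 : |x| ≤ (n:ℤ)+1) (hy1 : 1 ≤ |y|) (hy2 : |y| ≤ (n:ℤ)+1)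
    (hxy : |x| ≠ |y|) :
    (plen n x y : ℤ) = idx n x + idx n y - 2
      - (if idx n x < idx n y then 1 else 0)
      - (if 2*(n:ℤ)+3 < idx n x + idx n y then 1 else 0) := by
  obtain ⟨k, rfl⟩ : ∃ k, n = k + 2 := ⟨n-2, by omega⟩
  set S : Finset ℕ := (Finset.Icc 1 (k+2+1)).filter
      (fun v : ℕ => (v : ℤ) ≠ |x| ∧ (v : ℤ) ≠ |y|) with hS
  set f : Fin (k+2+1) → ℤ := minRep (k+2) x y with hf
  have hScard : (S.card : ℤ) = (k:ℤ) + 1 := by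
    rw [hS]
    have := cardK1 (k+2) |x| |y| hx1 (by push_cast; omega) hy1 (by push_cast; omega) hxy
    push_cast at this ⊢
    omega
  have hlen : (S.sort (· ≤ ·)).length = k+1 := by
    rw [Finset.length_sort]
    exact_mod_cast hScard
  have h0 : f 0 = x := by simp [hf, minRep]
  have h1 : f 1 = y := by simp [hf, minRep]
  have ht : ∀ j : Fin (k+1), f j.succ.succ = (((S.sort (· ≤ ·)).getD j 0 : ℕ) : ℤ) := by
    intro j
    have hv : ((j.succ.succ : Fin (k+2+1)) : ℕ) = (j : ℕ) + 2 := by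
      simp [Fin.val_succ]
    show minRep (k+2) x y j.succ.succ = _
    unfold minRep
    rw [hv, if_neg (by omega), if_neg (by omega), ← hS]
    norm_num
  have memS : ∀ u : ℕ, u ∈ S → 1 ≤ u := by
    intro u hu
    have := (Finset.mem_filter.mp hu).1
    rw [Finset.mem_Icc] at this
    omega
  have hQ0D : ∀ u v : ℕ, u ∈ S → v ∈ S → u < v → ¬ DiffNeg u v := by
    intro u v hu hv huv
    have h1u := memS u hu
    unfold DiffNeg
    omega
  have hQ0S : ∀ u v : ℕ, u ∈ S → v ∈ S → u < v → ¬ SumNeg u v := by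
    intro u v hu hv huv
    have h1u := memS u hu
    unfold SumNeg
    omega
  have hD := pairCount k f S x y DiffNeg h0 h1 hlen ht hQ0D
  have hSc := pairCount k f S x y SumNeg h0 h1 hlen ht hQ0S
  have hN := negCount k f S x y h0 h1 ht
  have hplen : plen (k+2) x y =
      ((if DiffNeg x y then 1 else 0)
        + ((S.filter fun v : ℕ => DiffNeg x (v:ℤ)).card
          + (S.filter fun v : ℕ => DiffNeg y (v:ℤ)).card))
      + ((if SumNeg x y then 1 else 0)
        + ((S.filter fun v : ℕ => SumNeg x (v:ℤ)).card
          + (S.filter fun v : ℕ => SumNeg y (v:ℤ)).card))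
      + ((if x < 0 then 1 else 0) + (if y < 0 then 1 else 0)) := by
    rw [← hD, ← hSc, ← hN]
    rfl
  have hx2' : |x| ≤ (↑(k+2) : ℤ) + 1 := by exact_mod_cast hx2
  have hy2' : |y| ≤ (↑(k+2) : ℤ) + 1 := by exact_mod_cast hy2
  have cDx : (((S.filter fun v : ℕ => DiffNeg x (v:ℤ)).card : ℤ))
      = if 0 < x then (|x| - 1) - (if |y| < |x| then 1 else 0) else (k:ℤ)+1 := by
    rcases lt_or_ge 0 x with hx0 | hx0
    · rw [if_pos hx0]
      have hax : |x| = x := abs_of_pos hx0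
      have e : (S.filter fun v : ℕ => DiffNeg x (v:ℤ))
          = (Finset.Icc 1 (k+2+1)).filter
            fun v : ℕ => ((v:ℤ) ≠ |x| ∧ (v:ℤ) ≠ |y|) ∧ (v:ℤ) < |x| := by
        rw [hS, Finset.filter_filter]
        refine Finset.filter_congr fun v hv => ?_
        rw [Finset.mem_Icc] at hv
        refine and_congr_right fun _ => ?_
        rw [hax]
        unfold DiffNeg
        constructor <;> intro h <;> omega
      rw [e]
      exact cardK2 (k+2) |x| |y| hx1 hx2' hy1 hy2'
    · rw [if_neg (by omega)]
      have hax : 1 ≤ -x := by rw [← abs_of_nonpos hx0]; exact hx1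
      have e : (S.filter fun v : ℕ => DiffNeg x (v:ℤ)) = S := by
        refine Finset.filter_true_of_mem fun v hv => ?_
        have := memS v hv
        unfold DiffNeg
        omega
      rw [e]
      exact hScard
  have cDy : (((S.filter fun v : ℕ => DiffNeg y (v:ℤ)).card : ℤ))
      = if 0 < y then (|y| - 1) - (if |x| < |y| then 1 else 0) else (k:ℤ)+1 := by
    rcases lt_or_ge 0 y with hy0 | hy0
    · rw [if_pos hy0]
      have hay : |y| = y := abs_of_pos hy0
      have e : (S.filter fun v : ℕ => DiffNeg y (v:ℤ))
          = (Finset.Icc 1 (k+2+1)).filter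
            fun v : ℕ => ((v:ℤ) ≠ |x| ∧ (v:ℤ) ≠ |y|) ∧ (v:ℤ) < |y| := by
        rw [hS, Finset.filter_filter]
        refine Finset.filter_congr fun v hv => ?_
        rw [Finset.mem_Icc] at hv
        refine and_congr_right fun _ => ?_
        rw [hay]
        unfold DiffNeg
        constructor <;> intro h <;> omega
      rw [e]
      exact cardK2' (k+2) |x| |y| hx1 hx2' hy1 hy2'
    · rw [if_neg (by omega)]
      have hay : 1 ≤ -y := by rw [← abs_of_nonpos hy0]; exact hy1
      have e : (S.filter fun v : ℕ => DiffNeg y (v:ℤ)) = S := by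
        refine Finset.filter_true_of_mem fun v hv => ?_
        have := memS v hv
        unfold DiffNeg
        omega
      rw [e]
      exact hScard
  have cSx : (((S.filter fun v : ℕ => SumNeg x (v:ℤ)).card : ℤ))
      = if 0 < x then 0 else ((k:ℤ)+3-|x|) - (if |x| < |y| then 1 else 0) := by
    rcases lt_or_ge 0 x with hx0 | hx0
    · rw [if_pos hx0]
      have e : (S.filter fun v : ℕ => SumNeg x (v:ℤ)) = ∅ := by
        rw [Finset.filter_eq_empty_iff]
        intro v hv
        have := memS v hv
        unfold SumNeg
        omega
      rw [e]
      rfl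
    · rw [if_neg (by omega)]
      have hax : |x| = -x := abs_of_nonpos hx0
      have e : (S.filter fun v : ℕ => SumNeg x (v:ℤ))
          = (Finset.Icc 1 (k+2+1)).filter
            fun v : ℕ => ((v:ℤ) ≠ |x| ∧ (v:ℤ) ≠ |y|) ∧ |x| < (v:ℤ) := by
        rw [hS, Finset.filter_filter]
        refine Finset.filter_congr fun v hv => ?_
        rw [Finset.mem_Icc] at hv
        refine and_congr_right fun _ => ?_
        rw [hax]
        unfold SumNeg
        constructor <;> intro h <;> omega
      rw [e]
      have := cardK3 (k+2) |x| |y| hx1 hx2' hy1 hy2'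
      push_cast at this ⊢
      omega
  have cSy : (((S.filter fun v : ℕ => SumNeg y (v:ℤ)).card : ℤ))
      = if 0 < y then 0 else ((k:ℤ)+3-|y|) - (if |y| < |x| then 1 else 0) := by
    rcases lt_or_ge 0 y with hy0 | hy0
    · rw [if_pos hy0]
      have e : (S.filter fun v : ℕ => SumNeg y (v:ℤ)) = ∅ := by
        rw [Finset.filter_eq_empty_iff]
        intro v hv
        have := memS v hv
        unfold SumNeg
        omega
      rw [e]
      rfl
    · rw [if_neg (by omega)]
      have hay : |y| = -y := abs_of_nonpos hy0
      have e : (S.filter fun v : ℕ => SumNeg y (v:ℤ))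
          = (Finset.Icc 1 (k+2+1)).filter
            fun v : ℕ => ((v:ℤ) ≠ |x| ∧ (v:ℤ) ≠ |y|) ∧ |y| < (v:ℤ) := by
        rw [hS, Finset.filter_filter]
        refine Finset.filter_congr fun v hv => ?_
        rw [Finset.mem_Icc] at hv
        refine and_congr_right fun _ => ?_
        rw [hay]
        unfold SumNeg
        constructor <;> intro h <;> omega
      rw [e]
      have := cardK3' (k+2) |x| |y| hx1 hx2' hy1 hy2'
      push_cast at this ⊢
      omega
  rw [hplen]
  push_cast
  rw [cDx, cDy, cSx, cSy]
  unfold idx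
  rcases abs_cases x with ⟨hax, hx0⟩ | ⟨hax, hx0⟩ <;>
    rcases abs_cases y with ⟨hay, hy0⟩ | ⟨hay, hy0⟩
  · -- x > 0, y > 0
    have hx0' : 0 < x := by omega
    have hy0' : 0 < y := by omega
    have pD : (if DiffNeg x y then (1:ℤ) else 0) = (if y < x then 1 else 0) := by
      rcases lt_or_ge y x with h | h
      · rw [if_pos (Or.inr (Or.inl ⟨hx0', hy0', h⟩)), if_pos h]
      · rw [if_neg (by unfold DiffNeg; omega), if_neg (by omega)]
    have pS : (if SumNeg x y then (1:ℤ) else 0) = 0 := by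
      rw [if_neg (by unfold SumNeg; omega)]
    rw [pD, pS]
    simp only [if_pos hx0', if_pos hy0', if_neg (show ¬ x < 0 by omega),
      if_neg (show ¬ y < 0 by omega)]
    split_ifs <;> omega
  · -- x > 0, y < 0
    have hx0' : 0 < x := by omega
    have hy0' : y < 0 := by omega
    have pD : (if DiffNeg x y then (1:ℤ) else 0) = 0 := by
      rw [if_neg (by unfold DiffNeg; omega)]
    have pS : (if SumNeg x y then (1:ℤ) else 0) = (if 0 < x + y then 1 else 0) := by
      rcases lt_or_ge 0 (x+y) with h | h
      · rw [if_pos (Or.inr (Or.inr ⟨hx0', hy0', h⟩)), if_pos h]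
      · rw [if_neg (by unfold SumNeg; omega), if_neg (by omega)]
    rw [pD, pS]
    simp only [if_pos hx0', if_pos hy0', if_neg (show ¬ x < 0 by omega),
      if_neg (show ¬ 0 < y by omega)]
    split_ifs <;> omega
  · -- x < 0, y > 0
    have hx0' : x < 0 := by omega
    have hy0' : 0 < y := by omega
    have pD : (if DiffNeg x y then (1:ℤ) else 0) = 1 := by
      rw [if_pos (Or.inl ⟨hx0', hy0'⟩)]
    have pS : (if SumNeg x y then (1:ℤ) else 0) = (if 0 < x + y then 1 else 0) := by
      rcases lt_or_ge 0 (x+y) with h | h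
      · rw [if_pos (Or.inr (Or.inl ⟨hx0', hy0', h⟩)), if_pos h]
      · rw [if_neg (by unfold SumNeg; omega), if_neg (by omega)]
    rw [pD, pS]
    simp only [if_pos hx0', if_pos hy0', if_neg (show ¬ 0 < x by omega),
      if_neg (show ¬ y < 0 by omega)]
    split_ifs <;> omega
  · -- x < 0, y < 0
    have hx0' : x < 0 := by omega
    have hy0' : y < 0 := by omega
    have pD : (if DiffNeg x y then (1:ℤ) else 0) = (if y < x then 1 else 0) := by
      rcases lt_or_ge y x with h | h
      · rw [if_pos (Or.inr (Or.inr ⟨hx0', hy0', h⟩)), if_pos h]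
      · rw [if_neg (by unfold DiffNeg; omega), if_neg (by omega)]
    have pS : (if SumNeg x y then (1:ℤ) else 0) = 1 := by
      rw [if_pos (Or.inl ⟨hx0', hy0'⟩)]
    rw [pD, pS]
    simp only [if_pos hx0', if_pos hy0', if_neg (show ¬ 0 < x by omega),
      if_neg (show ¬ 0 < y by omega)]
    split_ifs <;> omega


lemma build (n : ℕ) (r : ℤ) (hr1 : 1 ≤ r) (hr2 : r ≤ 2*(n:ℤ)+1) :
    ∃ c : ℤ, c ≠ -1 ∧ idx n c = r ∧ |c| = if r ≤ (n:ℤ)+1 then r else 2*(n:ℤ)+3-r := by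
  rcases le_or_gt r ((n:ℤ)+1) with h | h
  · refine ⟨r, by omega, ?_, ?_⟩
    · unfold idx; rw [if_pos (by omega)]
    · rw [if_pos h, abs_of_pos (by omega)]
  · refine ⟨r - (2*(n:ℤ)+3), by omega, ?_, ?_⟩
    · unfold idx; rw [if_neg (by omega)]; ring
    · rw [if_neg (by omega), abs_of_neg (by omega)]; ring

lemma idx_bounds (n : ℕ) (x : ℤ) (h1 : 1 ≤ |x|) (h2 : |x| ≤ (n:ℤ)+1) (h3 : x ≠ -1) :
    1 ≤ idx n x ∧ idx n x ≤ 2*(n:ℤ)+1 := by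
  unfold idx
  rcases abs_cases x with ⟨h, h'⟩ | ⟨h, h'⟩ <;> split_ifs <;> omega

lemma idx_abs (n : ℕ) (x : ℤ) (h1 : 1 ≤ |x|) (h2 : |x| ≤ (n:ℤ)+1) (h3 : x ≠ -1) :
    |x| = if idx n x ≤ (n:ℤ)+1 then idx n x else 2*(n:ℤ)+3 - idx n x := by
  unfold idx
  rcases abs_cases x with ⟨h, h'⟩ | ⟨h, h'⟩ <;> split_ifs <;> omega


set_option maxHeartbeats 3000000

/-- Every element `(x|y)` of `W^odd ∩ W^P` (signed values with `|x|,|y| ≤ n+1`,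
`|x| ≠ |y|`, avoiding the value `1̄ = -1`) other than the maximum
`(2̄|3̄) = (-2|-3)` is covered by another odd symplectic element: there is
`(c|d) ∈ W^odd ∩ W^P` with `(x|y) < (c|d)` in Bruhat order and
`ℓ(c|d) = ℓ(x|y) + 1`. -/
theorem stmt_14 (n : ℕ) (hn : 2 ≤ n) (x y : ℤ)
    (hx : 1 ≤ |x| ∧ |x| ≤ (n : ℤ) + 1) (hy : 1 ≤ |y| ∧ |y| ≤ (n : ℤ) + 1)
    (hxy : |x| ≠ |y|) (hox : x ≠ -1) (hoy : y ≠ -1)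
    (hne : ¬(x = -2 ∧ y = -3)) :
    ∃ c d : ℤ, (1 ≤ |c| ∧ |c| ≤ (n : ℤ) + 1) ∧ (1 ≤ |d| ∧ |d| ≤ (n : ℤ) + 1) ∧
      |c| ≠ |d| ∧ c ≠ -1 ∧ d ≠ -1 ∧
      tabLe n x y c d ∧ (x ≠ c ∨ y ≠ d) ∧
      plen n c d = plen n x y + 1 := by
  obtain ⟨hx1, hx2⟩ := hx
  obtain ⟨hy1, hy2⟩ := hy
  have hPx := idx_bounds n x hx1 hx2 hox
  have hPy := idx_bounds n y hy1 hy2 hoy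
  have hAx := idx_abs n x hx1 hx2 hox
  have hAy := idx_abs n y hy1 hy2 hoy
  have hp := plen_formula n hn x y hx1 hx2 hy1 hy2 hxy
  have hne1 : idx n x ≠ idx n y := by
    intro h; apply hxy; rw [hAx, hAy]; split_ifs <;> omega
  have hne2 : idx n x + idx n y ≠ 2*(n:ℤ)+3 := by
    intro h; apply hxy; rw [hAx, hAy]; split_ifs <;> omega
  have hmax : ¬(idx n x = 2*(n:ℤ)+1 ∧ idx n y = 2*(n:ℤ)) := by
    rintro ⟨h1, h2⟩
    apply hne
    constructor
    · rcases abs_cases x with ⟨h, h'⟩ | ⟨h, h'⟩ <;> revert h1 <;> unfold idx <;>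
        split_ifs <;> intro h1 <;> omega
    · rcases abs_cases y with ⟨h, h'⟩ | ⟨h, h'⟩ <;> revert h2 <;> unfold idx <;>
        split_ifs <;> intro h2 <;> omega
  by_cases hb1 : idx n x < idx n y
  · obtain ⟨c, hc1, hc2, hc3⟩ := build n (idx n y) (by clear hp; omega) (by clear hp; omega)
    obtain ⟨d, hd1, hd2, hd3⟩ := build n (idx n x) (by clear hp; omega) (by clear hp; omega)
    have hcb : 1 ≤ |c| ∧ |c| ≤ (n:ℤ)+1 := by
      clear hp; refine ⟨?_, ?_⟩ <;> rw [hc3] <;> split_ifs <;> omega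
    have hdb : 1 ≤ |d| ∧ |d| ≤ (n:ℤ)+1 := by
      clear hp; refine ⟨?_, ?_⟩ <;> rw [hd3] <;> split_ifs <;> omega
    have habs : |c| ≠ |d| := by clear hp; rw [hc3, hd3]; split_ifs <;> omega
    have hq := plen_formula n hn c d hcb.1 hcb.2 hdb.1 hdb.2 habs
    have key : (plen n c d : ℤ) = (plen n x y : ℤ) + 1 := by
      rw [hq, hp, hc2, hd2]; clear hq hp; split_ifs <;> omega
    clear hq hp
    refine ⟨c, d, hcb, hdb, habs, hc1, hd1, ?_, ?_, ?_⟩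
    · exact ⟨by omega, by omega, by omega⟩
    · exact Or.inl (fun h => by rw [← h] at hc2; omega)
    · exact_mod_cast key
  · by_cases hb2 : idx n x = idx n y + 1
    · by_cases hb3 : idx n x = (n:ℤ)+1 ∧ idx n y = (n:ℤ)
      · obtain ⟨c, hc1, hc2, hc3⟩ := build n (idx n x + 1) (by clear hp; omega) (by clear hp; omega)
        obtain ⟨d, hd1, hd2, hd3⟩ := build n (idx n y) (by clear hp; omega) (by clear hp; omega)
        have hcb : 1 ≤ |c| ∧ |c| ≤ (n:ℤ)+1 := by
          clear hp; refine ⟨?_, ?_⟩ <;> rw [hc3] <;> split_ifs <;> omega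
        have hdb : 1 ≤ |d| ∧ |d| ≤ (n:ℤ)+1 := by
          clear hp; refine ⟨?_, ?_⟩ <;> rw [hd3] <;> split_ifs <;> omega
        have habs : |c| ≠ |d| := by clear hp; rw [hc3, hd3]; split_ifs <;> omega
        have hq := plen_formula n hn c d hcb.1 hcb.2 hdb.1 hdb.2 habs
        have key : (plen n c d : ℤ) = (plen n x y : ℤ) + 1 := by
          rw [hq, hp, hc2, hd2]; clear hq hp; split_ifs <;> omega
        clear hq hp
        refine ⟨c, d, hcb, hdb, habs, hc1, hd1, ?_, ?_, ?_⟩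
        · exact ⟨by omega, by omega, by omega⟩
        · exact Or.inl (fun h => by rw [← h] at hc2; omega)
        · exact_mod_cast key
      · obtain ⟨c, hc1, hc2, hc3⟩ := build n (idx n x) (by clear hp; omega) (by clear hp; omega)
        obtain ⟨d, hd1, hd2, hd3⟩ := build n (idx n y + 2) (by clear hp; omega) (by clear hp; omega)
        have hcb : 1 ≤ |c| ∧ |c| ≤ (n:ℤ)+1 := by
          clear hp; refine ⟨?_, ?_⟩ <;> rw [hc3] <;> split_ifs <;> omega
        have hdb : 1 ≤ |d| ∧ |d| ≤ (n:ℤ)+1 := by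
          clear hp; refine ⟨?_, ?_⟩ <;> rw [hd3] <;> split_ifs <;> omega
        have habs : |c| ≠ |d| := by clear hp; rw [hc3, hd3]; split_ifs <;> omega
        have hq := plen_formula n hn c d hcb.1 hcb.2 hdb.1 hdb.2 habs
        have key : (plen n c d : ℤ) = (plen n x y : ℤ) + 1 := by
          rw [hq, hp, hc2, hd2]; clear hq hp; split_ifs <;> omega
        clear hq hp
        refine ⟨c, d, hcb, hdb, habs, hc1, hd1, ?_, ?_, ?_⟩
        · exact ⟨by omega, by omega, by omega⟩
        · exact Or.inr (fun h => by rw [← h] at hd2; omega)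
        · exact_mod_cast key
    · by_cases hb4 : idx n x + idx n y = 2*(n:ℤ)+2
      · by_cases hb5 : idx n x = idx n y + 2
        · obtain ⟨c, hc1, hc2, hc3⟩ := build n (idx n x + 1) (by clear hp; omega) (by clear hp; omega)
          obtain ⟨d, hd1, hd2, hd3⟩ := build n (idx n y + 1) (by clear hp; omega) (by clear hp; omega)
          have hcb : 1 ≤ |c| ∧ |c| ≤ (n:ℤ)+1 := by
            clear hp; refine ⟨?_, ?_⟩ <;> rw [hc3] <;> split_ifs <;> omega
          have hdb : 1 ≤ |d| ∧ |d| ≤ (n:ℤ)+1 := by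
            clear hp; refine ⟨?_, ?_⟩ <;> rw [hd3] <;> split_ifs <;> omega
          have habs : |c| ≠ |d| := by clear hp; rw [hc3, hd3]; split_ifs <;> omega
          have hq := plen_formula n hn c d hcb.1 hcb.2 hdb.1 hdb.2 habs
          have key : (plen n c d : ℤ) = (plen n x y : ℤ) + 1 := by
            rw [hq, hp, hc2, hd2]; clear hq hp; split_ifs <;> omega
          clear hq hp
          refine ⟨c, d, hcb, hdb, habs, hc1, hd1, ?_, ?_, ?_⟩
          · exact ⟨by omega, by omega, by omega⟩
          · exact Or.inl (fun h => by rw [← h] at hc2; omega)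
          · exact_mod_cast key
        · obtain ⟨c, hc1, hc2, hc3⟩ := build n (idx n x) (by clear hp; omega) (by clear hp; omega)
          obtain ⟨d, hd1, hd2, hd3⟩ := build n (idx n y + 2) (by clear hp; omega) (by clear hp; omega)
          have hcb : 1 ≤ |c| ∧ |c| ≤ (n:ℤ)+1 := by
            clear hp; refine ⟨?_, ?_⟩ <;> rw [hc3] <;> split_ifs <;> omega
          have hdb : 1 ≤ |d| ∧ |d| ≤ (n:ℤ)+1 := by
            clear hp; refine ⟨?_, ?_⟩ <;> rw [hd3] <;> split_ifs <;> omega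
          have habs : |c| ≠ |d| := by clear hp; rw [hc3, hd3]; split_ifs <;> omega
          have hq := plen_formula n hn c d hcb.1 hcb.2 hdb.1 hdb.2 habs
          have key : (plen n c d : ℤ) = (plen n x y : ℤ) + 1 := by
            rw [hq, hp, hc2, hd2]; clear hq hp; split_ifs <;> omega
          clear hq hp
          refine ⟨c, d, hcb, hdb, habs, hc1, hd1, ?_, ?_, ?_⟩
          · exact ⟨by omega, by omega, by omega⟩
          · exact Or.inr (fun h => by rw [← h] at hd2; omega)
          · exact_mod_cast key
      · obtain ⟨c, hc1, hc2, hc3⟩ := build n (idx n x) (by clear hp; omega) (by clear hp; omega)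
        obtain ⟨d, hd1, hd2, hd3⟩ := build n (idx n y + 1) (by clear hp; omega) (by clear hp; omega)
        have hcb : 1 ≤ |c| ∧ |c| ≤ (n:ℤ)+1 := by
          clear hp; refine ⟨?_, ?_⟩ <;> rw [hc3] <;> split_ifs <;> omega
        have hdb : 1 ≤ |d| ∧ |d| ≤ (n:ℤ)+1 := by
          clear hp; refine ⟨?_, ?_⟩ <;> rw [hd3] <;> split_ifs <;> omega
        have habs : |c| ≠ |d| := by clear hp; rw [hc3, hd3]; split_ifs <;> omega
        have hq := plen_formula n hn c d hcb.1 hcb.2 hdb.1 hdb.2 habs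
        have key : (plen n c d : ℤ) = (plen n x y : ℤ) + 1 := by
          rw [hq, hp, hc2, hd2]; clear hq hp; split_ifs <;> omega
        clear hq hp
        refine ⟨c, d, hcb, hdb, habs, hc1, hd1, ?_, ?_, ?_⟩
        · exact ⟨by omega, by omega, by omega⟩
        · exact Or.inr (fun h => by rw [← h] at hd2; omega)
        · exact_mod_cast key
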